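/- Sauer–Shelah lemma: Let t be a positive integer and M an X × Y 0-1 matrix with |Y| ≥ 2 such that any two row vectors of M are distinct. If |X| ≥ |Y|^t, then there exist X' ⊆ X and Y' ⊆ Y with |X'| = 2^t and |Y'| = t such that all 2^t possible 0-1 vectors of length t appear as rows of the submatrix M[X', Y']. -/

import Mathlib

open SimpleGraph
open scoped Classical

noncomputable section

/-- The graph `K_t ⊠ S_t`: a clique of size `t` (the `inl` part), an independent set of
size `t` (the `inr` part), joined by a perfect matching. -/
def ktst (t : ℕ) : SimpleGraph (Fin t ⊕ Fin t) :=
  SimpleGraph.fromRel (fun x y =>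
    match x, y with
    | Sum.inl i, Sum.inl j => i ≠ j
    | Sum.inl i, Sum.inr j => i = j
    | _, _ => False)

/-- The graph `K_t ⊠ K_t`: two cliques of size `t` joined by a perfect matching. -/
def ktkt (t : ℕ) : SimpleGraph (Fin t ⊕ Fin t) :=
  SimpleGraph.fromRel (fun x y =>
    match x, y with
    | Sum.inl i, Sum.inl j => i ≠ j
    | Sum.inr i, Sum.inr j => i ≠ j
    | Sum.inl i, Sum.inr j => i = j
    | _, _ => False)

/-- The cycle graph on `ZMod n`. -/
def cycleG (n : ℕ) : SimpleGraph (ZMod n) :=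
  SimpleGraph.fromRel (fun x y => y = x + 1)

/-- `σ` enumerates the vertices of `G` as a co-comparability ordering. -/
def IsCoCompOrdering {V : Type} {n : ℕ} (G : SimpleGraph V) (σ : Fin n ≃ V) : Prop :=
  ∀ i j k : Fin n, i < j → j < k → G.Adj (σ i) (σ k) →
    G.Adj (σ j) (σ i) ∨ G.Adj (σ j) (σ k)

/-- `G` contains `H` as an induced subgraph. -/
def ContainsInducedIso {V W : Type} (G : SimpleGraph V) (H : SimpleGraph W) : Prop :=
  ∃ f : W → V, Function.Injective f ∧ ∀ x y, H.Adj x y ↔ G.Adj (f x) (f y)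

/-- A graph is chordal iff it has no induced cycle of length at least 4. -/
def Chordal {V : Type} (G : SimpleGraph V) : Prop :=
  ∀ n, 4 ≤ n → ¬ ContainsInducedIso G (cycleG n)

/-- `G` contains `H` as an induced minor (via an induced minor model). -/
def HasInducedMinor {V W : Type} (G : SimpleGraph V) (H : SimpleGraph W) : Prop :=
  ∃ S : W → Set V,
    (∀ w, (G.induce (S w)).Connected) ∧
    (∀ w w', w ≠ w' → Disjoint (S w) (S w')) ∧
    (∀ w w', H.Adj w w' → ∃ a ∈ S w, ∃ b ∈ S w', G.Adj a b) ∧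
    (∀ w w', w ≠ w' → ¬ H.Adj w w' → ∀ a ∈ S w, ∀ b ∈ S w', ¬ G.Adj a b)

/-- `G` contains `K_t` as a minor (branch sets). -/
def HasCliqueMinor {V : Type} (G : SimpleGraph V) (t : ℕ) : Prop :=
  ∃ S : Fin t → Set V,
    (∀ i, (G.induce (S i)).Connected) ∧
    (∀ i j, i ≠ j → Disjoint (S i) (S j)) ∧
    (∀ i j, i ≠ j → ∃ a ∈ S i, ∃ b ∈ S j, G.Adj a b)

/-- There is an induced matching of `G` of size `m` between `A` and its complement:
the `2m` matched vertices induce exactly the `m` matching edges in `G`. -/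
def IsSimMatching {V : Type} (G : SimpleGraph V) (A : Set V) (m : ℕ) : Prop :=
  ∃ a b : Fin m → V,
    Function.Injective a ∧ Function.Injective b ∧
    (∀ i, a i ∈ A) ∧ (∀ i, b i ∉ A) ∧
    (∀ i j, G.Adj (a i) (b j) ↔ i = j) ∧
    (∀ i j, ¬ G.Adj (a i) (a j)) ∧
    (∀ i j, ¬ G.Adj (b i) (b j))

/-- There is an induced matching of size `m` in the bipartite graph `G[A, V \ A]`
of edges crossing the cut. -/
def IsMimMatching {V : Type} (G : SimpleGraph V) (A : Set V) (m : ℕ) : Prop :=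
  ∃ a b : Fin m → V,
    Function.Injective a ∧ Function.Injective b ∧
    (∀ i, a i ∈ A) ∧ (∀ i, b i ∉ A) ∧
    (∀ i j, G.Adj (a i) (b j) ↔ i = j)

def simval {V : Type} (G : SimpleGraph V) (A : Set V) : ℕ :=
  sSup {m | IsSimMatching G A m}

def mimval {V : Type} (G : SimpleGraph V) (A : Set V) : ℕ :=
  sSup {m | IsMimMatching G A m}

/-- GF(2)-rank of the `A × Aᶜ` submatrix of the adjacency matrix: the dimension of the
span of the rows of that submatrix (rows extended by zero on columns of `A`). -/
def cutrk {V : Type} [Fintype V] (G : SimpleGraph V) (A : Set V) : ℕ :=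
  Module.finrank (ZMod 2) (Submodule.span (ZMod 2)
    {r : V → ZMod 2 | ∃ a ∈ A, r = fun v => if v ∉ A ∧ G.Adj a v then 1 else 0})

/-- A branch-decomposition of a graph on vertex set `V`: a finite subcubic tree together
with an injection of `V` onto its leaves. -/
structure BranchDecomp (V : Type) [Fintype V] where
  β : Type
  finβ : Fintype β
  T : SimpleGraph β
  connected : T.Connected
  acyclic : T.IsAcyclic
  subcubic : ∀ x : β, (T.neighborSet x).ncard = 1 ∨ (T.neighborSet x).ncard = 3
  L : V → β
  inj : Function.Injective L
  leaves : ∀ x : β, (T.neighborSet x).ncard = 1 ↔ ∃ v, L v = x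

/-- The side of the cut induced by the tree edge `xy`, on the side of `x`. -/
def BranchDecomp.cut {V : Type} [Fintype V] (D : BranchDecomp V) (x y : D.β) : Set V :=
  {v | (D.T.deleteEdges {s(x, y)}).Reachable (D.L v) x}

/-- The `f`-width of a graph on vertex set `V`: minimum over branch-decompositions of the
maximum of `f` over the cuts of the decomposition. -/
def fWidth {V : Type} [Fintype V] (f : Set V → ℕ) : ℕ :=
  sInf {w | ∃ D : BranchDecomp V, ∀ x y, D.T.Adj x y → f (D.cut x y) ≤ w}

def simw {V : Type} [Fintype V] (G : SimpleGraph V) : ℕ := fWidth (simval G)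
def mimw {V : Type} [Fintype V] (G : SimpleGraph V) : ℕ := fWidth (mimval G)
def rankw {V : Type} [Fintype V] (G : SimpleGraph V) : ℕ := fWidth (cutrk G)

/-- Contraction of the edge `v₁v₂`: the vertex `v₂` is removed and `v₁` plays the role of
the contracted vertex `z`, adjacent to all former neighbors of `v₁` or `v₂`. -/
def contractE {V : Type} (G : SimpleGraph V) (v1 v2 : V) : SimpleGraph {v : V // v ≠ v2} :=
  SimpleGraph.fromRel (fun x y =>
    G.Adj x y ∨ ((x : V) = v1 ∧ G.Adj v2 y) ∨ ((y : V) = v1 ∧ G.Adj (x : V) v2))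

/-- The `(p × q)` column-clique grid. -/
def ccGrid (p q : ℕ) : SimpleGraph (Fin p × Fin q) :=
  SimpleGraph.fromRel (fun u v =>
    (u.2 = v.2) ∨ (u.1 = v.1 ∧ ((u.2 : ℕ) + 1 = v.2 ∨ (v.2 : ℕ) + 1 = u.2)))

/-- The `(p × q)` Hsu-clique chain graph. -/
def hsu (p q : ℕ) : SimpleGraph (Fin p × Fin q) :=
  SimpleGraph.fromRel (fun u v =>
    (u.2 = v.2) ∨ ((u.2 : ℕ) + 1 = v.2 ∧ u.1 ≤ v.1))

/-- The `(k × k)` grid graph. -/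
def gridG (k : ℕ) : SimpleGraph (Fin k × Fin k) :=
  SimpleGraph.fromRel (fun u v =>
    (u.1 = v.1 ∧ (u.2 : ℕ) + 1 = v.2) ∨ (u.2 = v.2 ∧ (u.1 : ℕ) + 1 = v.1))

/-- A tree-decomposition of `G`. -/
structure TreeDecomp (V : Type) (G : SimpleGraph V) where
  β : Type
  finβ : Fintype β
  T : SimpleGraph β
  connected : T.Connected
  acyclic : T.IsAcyclic
  B : β → Set V
  coverV : ∀ v : V, ∃ t, v ∈ B t
  coverE : ∀ u v, G.Adj u v → ∃ t, u ∈ B t ∧ v ∈ B t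
  coherent : ∀ v : V, (T.induce {t | v ∈ B t}).Connected

/-- Tree-width. -/
def tw {V : Type} (G : SimpleGraph V) : ℕ :=
  sInf {k | ∃ D : TreeDecomp V G, ∀ t, (D.B t).ncard ≤ k + 1}

/-- `G` is `d`-degenerate: every (induced) subgraph has a vertex of degree at most `d`. -/
def Degenerate {V : Type} (G : SimpleGraph V) (d : ℕ) : Prop :=
  ∀ S : Set V, S.Nonempty → ∃ v ∈ S, {u ∈ S | G.Adj v u}.ncard ≤ d

/-- Every graph on `N` vertices contains a clique of size `k` or an independent set of
size `l`. -/
def ramseyProp (N k l : ℕ) : Prop :=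
  ∀ G : SimpleGraph (Fin N),
    (∃ s : Finset (Fin N), G.IsNClique k s) ∨ (∃ s : Finset (Fin N), Gᶜ.IsNClique l s)

/-- The Ramsey number `R(k, l)`. -/
def ramsey (k l : ℕ) : ℕ := sInf {N | ramseyProp N k l}

/-- `G` is a circle graph: the intersection graph of chords of a circle, equivalently the
overlap graph of a family of intervals with pairwise distinct endpoints. -/
def IsCircleGraph {V : Type} (G : SimpleGraph V) : Prop :=
  ∃ a b : V → ℝ, (∀ v, a v < b v) ∧
    (∀ v w : V, v ≠ w → a v ≠ a w ∧ a v ≠ b w ∧ b v ≠ a w ∧ b v ≠ b w) ∧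
    (∀ v w, G.Adj v w ↔
      (a v < a w ∧ a w < b v ∧ b v < b w) ∨ (a w < a v ∧ a v < b w ∧ b w < b v))

/-- Vertex set of the split graph witnessing unbounded mim-width: a clique `Fin m`
together with one independent vertex for each nonempty subset of the clique. -/
abbrev splitV (m : ℕ) := Fin m ⊕ {S : Finset (Fin m) // S.Nonempty}

/-- The split graph with clique of size `m` and an independent set of size `2^m - 1`
whose vertices have pairwise distinct nonempty neighborhoods in the clique. -/
def splitG (m : ℕ) : SimpleGraph (splitV m) :=
  SimpleGraph.fromRel (fun x y =>
    match x, y with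
    | Sum.inl i, Sum.inl j => i ≠ j
    | Sum.inl i, Sum.inr S => i ∈ S.1
    | _, _ => False)

end

lemma geom_aux (n t : ℕ) (hn : 2 ≤ n) : ∑ i ∈ Finset.range t, n ^ i ≤ n ^ t - 1 := by
  induction t with
  | zero => simp
  | succ t ih =>
    rw [Finset.sum_range_succ, pow_succ]
    have h1 : 1 ≤ n ^ t := Nat.one_le_pow _ _ (by omega)
    have h2 : n ^ t * 2 ≤ n ^ t * n := Nat.mul_le_mul_left _ hn
    omega

/-- Sauer–Shelah lemma. If `M` is an `X × Y` 0-1 matrix with pairwise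
distinct rows, `|Y| ≥ 2` and `|X| ≥ |Y|^t`, then there are `X' ⊆ X` with `|X'| = 2^t`
and `Y' ⊆ Y` with `|Y'| = t` such that every 0-1 vector of length `t` appears as a row
of `M[X', Y']`. -/
theorem stmt7 {X Y : Type} [Fintype X] [Fintype Y] (t : ℕ) (ht : 1 ≤ t)
    (M : X → Y → Bool) (hM : Function.Injective M) (hY : 2 ≤ Fintype.card Y)
    (hX : Fintype.card Y ^ t ≤ Fintype.card X) :
    ∃ (X' : Finset X) (Y' : Finset Y), X'.card = 2 ^ t ∧ Y'.card = t ∧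
      ∀ g : Y → Bool, ∃ x ∈ X', ∀ y ∈ Y', M x y = g y := by
  
  classical
  set n := Fintype.card Y with hn
  let A : X → Finset Y := fun x => Finset.univ.filter (fun y => M x y = true)
  have hA : Function.Injective A := by
    intro x x' h
    apply hM
    funext y
    have hy := Finset.ext_iff.1 h y
    simp only [A, Finset.mem_filter, Finset.mem_univ, true_and] at hy
    cases h1 : M x y <;> cases h2 : M x' y <;> simp_all
  let 𝒜 := Finset.univ.image A
  have hcard𝒜 : 𝒜.card = Fintype.card X := by
    rw [Finset.card_image_of_injective _ hA, Finset.card_univ]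
  have hex : ∃ s ∈ 𝒜.shatterer, t ≤ s.card := by
    by_contra h
    push_neg at h
    have hsub : 𝒜.shatterer ⊆ (Finset.range t).biUnion
        (fun i => Finset.powersetCard i (Finset.univ : Finset Y)) := by
      intro s hs
      simp only [Finset.mem_biUnion, Finset.mem_range, Finset.mem_powersetCard]
      exact ⟨s.card, h s hs, Finset.subset_univ _, rfl⟩
    have h1 : 𝒜.shatterer.card ≤ ∑ i ∈ Finset.range t, n.choose i := by
      calc 𝒜.shatterer.card ≤ ((Finset.range t).biUnion
            (fun i => Finset.powersetCard i (Finset.univ : Finset Y))).card :=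
            Finset.card_le_card hsub
        _ ≤ ∑ i ∈ Finset.range t, (Finset.powersetCard i (Finset.univ : Finset Y)).card :=
            Finset.card_biUnion_le
        _ = ∑ i ∈ Finset.range t, n.choose i := by
            simp [Finset.card_powersetCard, hn]
    have h2 : ∑ i ∈ Finset.range t, n.choose i ≤ ∑ i ∈ Finset.range t, n ^ i :=
      Finset.sum_le_sum fun i _ => Nat.choose_le_pow n i
    have h3 := geom_aux n t hY
    have h4 := Finset.card_le_card_shatterer 𝒜
    have h5 : 1 ≤ n ^ t := Nat.one_le_pow _ _ (by omega)
    omega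
  obtain ⟨s, hs, hts⟩ := hex
  obtain ⟨Y', hY's, hY't⟩ := Finset.exists_subset_card_eq hts
  have hshat : 𝒜.Shatters Y' := (Finset.mem_shatterer.1 hs).mono_right hY's
  haveI : Nonempty X := by
    rw [← Fintype.card_pos_iff]
    have : 0 < n ^ t := pow_pos (by omega) _
    omega
  let f : Finset Y → X := fun S =>
    if h : ∃ x : X, Y' ∩ A x = S then h.choose else Classical.arbitrary X
  have hf : ∀ S ⊆ Y', Y' ∩ A (f S) = S := by
    intro S hS
    obtain ⟨u, hu, huS⟩ := hshat hS
    simp only [𝒜, Finset.mem_image, Finset.mem_univ, true_and] at hu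
    obtain ⟨x, rfl⟩ := hu
    have hex2 : ∃ x : X, Y' ∩ A x = S := ⟨x, huS⟩
    simp only [f, dif_pos hex2]
    exact hex2.choose_spec
  refine ⟨Y'.powerset.image f, Y', ?_, hY't, ?_⟩
  · rw [Finset.card_image_of_injOn, Finset.card_powerset, hY't]
    intro S hS S' hS' hSS'
    rw [Finset.mem_coe, Finset.mem_powerset] at hS hS'
    rw [← hf S hS, ← hf S' hS', hSS']
  · intro g
    set S := Y'.filter (fun y => g y = true) with hSdef
    have hSsub : S ⊆ Y' := Finset.filter_subset _ _
    refine ⟨f S, Finset.mem_image_of_mem f (Finset.mem_powerset.2 hSsub), ?_⟩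
    intro y hy
    have h := hf S hSsub
    have hmem := Finset.ext_iff.1 h y
    simp only [Finset.mem_inter, hSdef, Finset.mem_filter, A, Finset.mem_univ,
      true_and] at hmem
    cases h1 : M (f S) y <;> cases h2 : g y <;> simp_all
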